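/- If G is a finite connected simple graph with n(G) ≥ 2, then vv(G) = n(G) − 2 if and only if G contains no universal vertex and G contains a spanning double star. -/

import Mathlib

open SimpleGraph

variable {V : Type*}

/-- A walk `p` is a shortest path between its endpoints. -/
def SimpleGraph.IsShortestPath (G : SimpleGraph V) {x y : V} (p : G.Walk x y) : Prop :=
  p.IsPath ∧ p.length = G.dist x y

/-- `S` is an `x`-visibility set: `x ∉ S` and for every `y ∈ S` there is a shortest
`x,y`-path meeting `S` only in `y`. -/
def SimpleGraph.IsXVisSet (G : SimpleGraph V) (x : V) (S : Finset V) : Prop :=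
  x ∉ S ∧ ∀ y ∈ S, ∃ p : G.Walk x y, G.IsShortestPath p ∧
    ∀ z ∈ p.support, z ∈ S → z = y

/-- The `x`-visibility number `v_x(G)`: the maximum cardinality of an `x`-visibility set. -/
noncomputable def SimpleGraph.vx (G : SimpleGraph V) (x : V) : ℕ :=
  sSup {n | ∃ S : Finset V, G.IsXVisSet x S ∧ S.card = n}

/-- The vertex visibility number `vv(G)`: the maximum of `v_x(G)` over all vertices. -/
noncomputable def SimpleGraph.vv (G : SimpleGraph V) [Fintype V] : ℕ :=
  Finset.univ.sup fun x => G.vx x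

section Aux

variable {G : SimpleGraph V}

lemma loop_path_nil {v : V} (q : G.Walk v v) (h : q.IsPath) : q = SimpleGraph.Walk.nil := by
  cases q with
  | nil => rfl
  | cons h' r =>
    rw [Walk.cons_isPath_iff] at h
    exact absurd (Walk.end_mem_support r) h.2

lemma walk_two_cases {x w y : V} (hxy : x ≠ y)
    (p : G.Walk x y) (hp : p.IsPath)
    (htri : ∀ z ∈ p.support, z = x ∨ z = w ∨ z = y) :
    (p.length = 1 ∧ G.Adj x y) ∨ (p.length = 2 ∧ G.Adj x w ∧ G.Adj w y) := by
  cases p with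
  | nil => exact absurd rfl hxy
  | cons h q =>
    rename_i u
    rw [Walk.cons_isPath_iff] at hp
    by_cases huy : u = y
    · subst huy
      have hq : q = Walk.nil := loop_path_nil q hp.1
      subst hq
      exact Or.inl ⟨rfl, h⟩
    · have hux : u ≠ x := fun h' => hp.2 (h' ▸ q.start_mem_support)
      have huw : u = w := by
        rcases htri u (by simp) with h1 | h1 | h1
        · exact absurd h1 hux
        · exact h1
        · exact absurd h1 huy
      subst huw
      cases q with
      | nil => exact absurd rfl huy
      | cons h' r =>
        rename_i u'
        rw [Walk.cons_isPath_iff] at hp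
        obtain ⟨⟨hr, hwr⟩, hxq⟩ := hp
        by_cases hu'y : u' = y
        · subst hu'y
          have hrnil : r = Walk.nil := loop_path_nil r hr
          subst hrnil
          exact Or.inr ⟨rfl, h, h'⟩
        · exfalso
          have hu'x : u' ≠ x := by
            intro h''
            subst h''
            exact hxq (by simp)
          have hu'w : u' ≠ u := fun h'' => hwr (h'' ▸ r.start_mem_support)
          rcases htri u' (by simp [r.start_mem_support]) with h1 | h1 | h1
          · exact hu'x h1
          · exact hu'w h1
          · exact hu'y h1

end Aux

section Aux2

variable {G : SimpleGraph V} [Fintype V]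

lemma visSet_card_le {x : V} {S : Finset V} (h : G.IsXVisSet x S) :
    S.card ≤ Fintype.card V - 1 := by
  classical
  have hsub : S ⊆ Finset.univ.erase x := fun y hy =>
    Finset.mem_erase.2 ⟨fun h' => h.1 (h' ▸ hy), Finset.mem_univ _⟩
  calc S.card ≤ (Finset.univ.erase x).card := Finset.card_le_card hsub
    _ = Fintype.card V - 1 := by
        rw [Finset.card_erase_of_mem (Finset.mem_univ x), Finset.card_univ]

lemma bddAbove_vxSet (G : SimpleGraph V) (x : V) :
    BddAbove {n | ∃ S : Finset V, G.IsXVisSet x S ∧ S.card = n} :=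
  ⟨Fintype.card V - 1, fun _ ⟨_, hS, hc⟩ => hc ▸ visSet_card_le hS⟩

lemma vxSet_nonempty (G : SimpleGraph V) (x : V) :
    {n | ∃ S : Finset V, G.IsXVisSet x S ∧ S.card = n}.Nonempty :=
  ⟨0, ∅, ⟨Finset.notMem_empty x, fun y hy => absurd hy (Finset.notMem_empty y)⟩,
    Finset.card_empty⟩

lemma card_le_vx {x : V} {S : Finset V} (h : G.IsXVisSet x S) : S.card ≤ G.vx x :=
  le_csSup (bddAbove_vxSet G x) ⟨S, h, rfl⟩

lemma vx_spec (G : SimpleGraph V) (x : V) :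
    ∃ S : Finset V, G.IsXVisSet x S ∧ S.card = G.vx x :=
  Nat.sSup_mem (vxSet_nonempty G x) (bddAbove_vxSet G x)

lemma vx_le_vv (G : SimpleGraph V) (x : V) : G.vx x ≤ G.vv :=
  Finset.le_sup (Finset.mem_univ x)

lemma vv_spec (G : SimpleGraph V) [Nonempty V] : ∃ x : V, G.vv = G.vx x := by
  obtain ⟨x, -, hx⟩ := Finset.exists_mem_eq_sup Finset.univ Finset.univ_nonempty
    (fun x => G.vx x)
  exact ⟨x, hx⟩

lemma vv_le (G : SimpleGraph V) [Nonempty V] : G.vv ≤ Fintype.card V - 1 := by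
  obtain ⟨x, hx⟩ := vv_spec G
  obtain ⟨S, hS, hc⟩ := vx_spec G x
  rw [hx, ← hc]
  exact visSet_card_le hS

/-- cover condition gives a visibility set of size n-2 -/
lemma isXVisSet_of_cover [DecidableEq V] (hconn : G.Connected) {x w : V} (hxw : x ≠ w)
    (hcov : ∀ y : V, y ≠ x → y ≠ w → G.Adj x y ∨ (G.Adj x w ∧ G.Adj w y)) :
    G.IsXVisSet x (Finset.univ \ {x, w}) := by
  classical
  constructor
  · simp
  · intro y hy
    simp only [Finset.mem_sdiff, Finset.mem_univ, Finset.mem_insert, Finset.mem_singleton,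
      true_and, not_or] at hy
    obtain ⟨hyx, hyw⟩ := hy
    by_cases hadj : G.Adj x y
    · refine ⟨Walk.cons hadj Walk.nil, ⟨?_, ?_⟩, ?_⟩
      · exact Walk.IsPath.nil.cons (by simpa using (Ne.symm hyx : x ≠ y))
      · simp [(dist_eq_one_iff_adj).2 hadj]
      · intro z hz hzS
        simp only [Walk.support_cons, Walk.support_nil, List.mem_cons,
          List.mem_singleton, List.not_mem_nil, or_false] at hz
        rcases hz with rfl | rfl
        · simp at hzS
        · rfl
    · obtain ⟨h1, h2⟩ := (hcov y hyx hyw).resolve_left hadj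
      refine ⟨Walk.cons h1 (Walk.cons h2 Walk.nil), ⟨?_, ?_⟩, ?_⟩
      · rw [Walk.isPath_def]
        simp only [Walk.support_cons, Walk.support_nil]
        simp [hxw, (Ne.symm hyx : x ≠ y), (Ne.symm hyw : w ≠ y)]
      · have hle : G.dist x y ≤ 2 := by
          have := dist_le (Walk.cons h1 (Walk.cons h2 Walk.nil))
          simpa using this
        have h0 : G.dist x y ≠ 0 := by
          have := hconn.pos_dist_of_ne (Ne.symm hyx)
          omega
        have hone : G.dist x y ≠ 1 := fun h => hadj ((dist_eq_one_iff_adj).1 h)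
        simp only [Walk.length_cons, Walk.length_nil]
        omega
      · intro z hz hzS
        simp only [Walk.support_cons, Walk.support_nil, List.mem_cons,
          List.not_mem_nil, or_false] at hz
        simp only [Finset.mem_sdiff, Finset.mem_univ, Finset.mem_insert, Finset.mem_singleton,
          true_and, not_or] at hzS
        rcases hz with rfl | rfl | rfl
        · exact absurd rfl hzS.1
        · exact absurd rfl hzS.2
        · rfl

lemma card_univ_sdiff_pair [DecidableEq V] {x w : V} (hxw : x ≠ w) :
    (Finset.univ \ {x, w} : Finset V).card = Fintype.card V - 2 := by
  classical
  rw [Finset.card_sdiff_of_subset (Finset.subset_univ _), Finset.card_univ, Finset.card_pair hxw]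

end Aux2

section Aux3

variable {G : SimpleGraph V} [Fintype V]

lemma universal_of_visSet_card [DecidableEq V] {x : V} {S : Finset V}
    (hS : G.IsXVisSet x S) (hc : S.card = Fintype.card V - 1) :
    ∀ y, y ≠ x → G.Adj x y := by
  have hall : ∀ z : V, z ≠ x → z ∈ S := by
    have hcard : (insert x S).card = Fintype.card V := by
      rw [Finset.card_insert_of_notMem hS.1, hc]
      have : 1 ≤ Fintype.card V := Fintype.card_pos_iff.2 ⟨x⟩
      omega
    have huniv : (insert x S) = Finset.univ :=
      Finset.eq_univ_of_card _ hcard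
    intro z hz
    have : z ∈ insert x S := huniv ▸ Finset.mem_univ z
    rcases Finset.mem_insert.1 this with h | h
    · exact absurd h hz
    · exact h
  intro y hy
  obtain ⟨p, hp, hmeet⟩ := hS.2 y (hall y hy)
  have htri : ∀ z ∈ p.support, z = x ∨ z = x ∨ z = y := by
    intro z hz
    by_cases hzx : z = x
    · exact Or.inl hzx
    · exact Or.inr (Or.inr (hmeet z hz (hall z hzx)))
  rcases walk_two_cases (Ne.symm hy) p hp.1 htri with ⟨-, h⟩ | ⟨-, h, -⟩
  · exact h
  · exact absurd h G.irrefl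

lemma cover_of_visSet_card [DecidableEq V] {x : V} {S : Finset V}
    (hS : G.IsXVisSet x S) (hc : S.card = Fintype.card V - 2)
    (hn : 2 ≤ Fintype.card V) :
    ∃ w : V, w ≠ x ∧ w ∉ S ∧ (∀ z : V, z = x ∨ z = w ∨ z ∈ S) ∧
      ∀ y ∈ S, G.Adj x y ∨ (G.Adj x w ∧ G.Adj w y ∧ ¬ G.Adj x y) := by
  have hcard : (Finset.univ \ insert x S).card = 1 := by
    rw [Finset.card_sdiff_of_subset (Finset.subset_univ _), Finset.card_univ,
      Finset.card_insert_of_notMem hS.1, hc]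
    omega
  obtain ⟨w, hw⟩ := Finset.card_eq_one.1 hcard
  have hwmem : w ∈ Finset.univ \ insert x S := hw ▸ Finset.mem_singleton_self w
  have hwx : w ≠ x := by
    intro h
    simp [h] at hwmem
  have hwS : w ∉ S := by
    simp only [Finset.mem_sdiff, Finset.mem_insert] at hwmem
    tauto
  have htri : ∀ z : V, z = x ∨ z = w ∨ z ∈ S := by
    intro z
    by_cases hz : z ∈ insert x S
    · rcases Finset.mem_insert.1 hz with h | h
      · exact Or.inl h
      · exact Or.inr (Or.inr h)
    · have : z ∈ Finset.univ \ insert x S := Finset.mem_sdiff.2 ⟨Finset.mem_univ z, hz⟩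
      rw [hw, Finset.mem_singleton] at this
      exact Or.inr (Or.inl this)
  refine ⟨w, hwx, hwS, htri, ?_⟩
  intro y hy
  have hyx : y ≠ x := fun h => hS.1 (h ▸ hy)
  obtain ⟨p, hp, hmeet⟩ := hS.2 y hy
  have htri' : ∀ z ∈ p.support, z = x ∨ z = w ∨ z = y := by
    intro z hz
    rcases htri z with h | h | h
    · exact Or.inl h
    · exact Or.inr (Or.inl h)
    · exact Or.inr (Or.inr (hmeet z hz h))
  rcases walk_two_cases (Ne.symm hyx) p hp.1 htri' with ⟨-, h⟩ | ⟨hlen, h1, h2⟩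
  · exact Or.inl h
  · refine Or.inr ⟨h1, h2, fun hadj => ?_⟩
    have := hp.2
    rw [hlen] at this
    exact absurd (dist_eq_one_iff_adj.2 hadj) (by omega)

lemma isXVisSet_univ_erase [DecidableEq V] {x : V} (hu : ∀ y, y ≠ x → G.Adj x y) :
    G.IsXVisSet x (Finset.univ.erase x) := by
  constructor
  · simp
  · intro y hy
    have hyx : y ≠ x := (Finset.mem_erase.1 hy).1
    have hadj := hu y hyx
    refine ⟨Walk.cons hadj Walk.nil,
      ⟨Walk.IsPath.nil.cons (by simpa using (Ne.symm hyx : x ≠ y)),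
        by simp [dist_eq_one_iff_adj.2 hadj]⟩, ?_⟩
    intro z hz hzS
    simp only [Walk.support_cons, Walk.support_nil, List.mem_cons,
      List.not_mem_nil, or_false] at hz
    rcases hz with rfl | rfl | h
    · exact absurd rfl (Finset.mem_erase.1 hzS).1
    · rfl

lemma vv_le_of_no_universal [Nonempty V]
    (hnu : ¬ ∃ u : V, ∀ y, y ≠ u → G.Adj u y) : G.vv ≤ Fintype.card V - 2 := by
  classical
  obtain ⟨x, hx⟩ := vv_spec G
  obtain ⟨S, hS, hc⟩ := vx_spec G x
  by_contra h
  have h1 : S.card ≤ Fintype.card V - 1 := visSet_card_le hS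
  have h2 : S.card = Fintype.card V - 1 := by
    rw [hc, ← hx]
    rw [hc, ← hx] at h1
    omega
  exact hnu ⟨x, universal_of_visSet_card hS h2⟩

lemma universal_vv (hn : 2 ≤ Fintype.card V) {x : V} (hu : ∀ y, y ≠ x → G.Adj x y) :
    G.vv = Fintype.card V - 1 := by
  classical
  have : Nonempty V := Fintype.card_pos_iff.1 (by omega)
  refine le_antisymm (vv_le G) ?_
  have h1 := card_le_vx (isXVisSet_univ_erase hu)
  have h2 := vx_le_vv G x
  rw [Finset.card_erase_of_mem (Finset.mem_univ x), Finset.card_univ] at h1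
  omega

lemma exists_adj (hconn : G.Connected) (hn : 2 ≤ Fintype.card V) (x : V) :
    ∃ y, G.Adj x y := by
  obtain ⟨y, hy⟩ := Fintype.exists_ne_of_one_lt_card (by omega) x
  obtain ⟨p⟩ := hconn.preconnected x y
  cases p with
  | nil => exact absurd rfl (Ne.symm hy)
  | cons h q => exact ⟨_, h⟩

lemma one_le_vv (hconn : G.Connected) (hn : 2 ≤ Fintype.card V) : 1 ≤ G.vv := by
  classical
  have hne : Nonempty V := Fintype.card_pos_iff.1 (by omega)
  obtain ⟨x⟩ := hne
  obtain ⟨y, hy⟩ := exists_adj hconn hn x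
  have hvis : G.IsXVisSet x {y} := by
    constructor
    · simp [hy.ne]
    · intro z hz
      rw [Finset.mem_singleton] at hz
      subst hz
      refine ⟨Walk.cons hy Walk.nil,
        ⟨Walk.IsPath.nil.cons (by simpa using hy.ne),
          by simp [dist_eq_one_iff_adj.2 hy]⟩, ?_⟩
      intro z hz hzS
      rw [Finset.mem_singleton] at hzS
      exact hzS
  have := card_le_vx hvis
  have h2 := vx_le_vv G x
  simp at this
  omega
end Aux3

section DoubleStar

lemma no_cycle_at_leaf {H : SimpleGraph V} {v : V}
    (hnb : ∀ u w, H.Adj v u → H.Adj v w → u = w) {c : H.Walk v v} (hc : c.IsCycle) :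
    False := by
  obtain ⟨a, h, q, rfl⟩ := Walk.not_nil_iff.1 hc.not_nil
  have hrevnil : ¬ (Walk.cons h q).reverse.Nil := by
    rw [Walk.nil_iff_length_eq, Walk.length_reverse]
    have := hc.three_le_length
    omega
  obtain ⟨u2, h2, q2, hq2⟩ := Walk.not_nil_iff.1 hrevnil
  have hu2 : a = u2 := hnb a u2 h h2
  subst hu2
  have hedges : (Walk.cons h q).edges.reverse = s(v, a) :: q2.edges := by
    rw [← Walk.edges_reverse, hq2, Walk.edges_cons]
  have hform : (Walk.cons h q).edges = q2.edges.reverse ++ [s(v, a)] := by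
    have h' := congrArg List.reverse hedges
    rw [List.reverse_reverse] at h'
    rw [h']
    simp
  have hlen : 3 ≤ (Walk.cons h q).edges.length := by
    rw [Walk.length_edges]
    exact hc.three_le_length
  have hnodup : (Walk.cons h q).edges.Nodup := hc.isCircuit.isTrail.edges_nodup
  rw [Walk.edges_cons] at hform hnodup hlen
  rcases hq : q2.edges.reverse with _ | ⟨b, t⟩
  · rw [hq] at hform
    simp only [List.nil_append] at hform
    have : q.edges = [] := by
      have h'' := congrArg List.tail hform
      simpa using h''
    rw [this] at hlen
    simp at hlen
  · rw [hq] at hform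
    simp only [List.cons_append, List.cons.injEq] at hform
    have hmem : s(v, a) ∈ q.edges := by
      rw [hform.2]
      simp
    exact (List.nodup_cons.1 hnodup).1 hmem

lemma exists_doubleStar [Fintype V] (G : SimpleGraph V) {c1 c2 : V} (h12 : c1 ≠ c2)
    (hadj : G.Adj c1 c2)
    (f : V → V) (hf : ∀ v, v ≠ c1 → v ≠ c2 → (f v = c1 ∨ f v = c2) ∧ G.Adj (f v) v)
    {v1 v2 : V} (hv1 : v1 ≠ c1) (hv1' : v1 ≠ c2) (hfv1 : f v1 = c1)
    (hv2 : v2 ≠ c1) (hv2' : v2 ≠ c2) (hfv2 : f v2 = c2) :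
    ∃ T : SimpleGraph V, T ≤ G ∧ T.IsTree ∧
      {v : V | (T.neighborSet v).ncard ≠ 1}.ncard = 2 := by
  classical
  set T : SimpleGraph V := {
    Adj := fun u v => (u = c1 ∧ v = c2) ∨ (u = c2 ∧ v = c1) ∨
      ((u ≠ c1 ∧ u ≠ c2) ∧ v = f u) ∨ ((v ≠ c1 ∧ v ≠ c2) ∧ u = f v)
    symm := ⟨fun u v h => by tauto⟩
    loopless := by
      refine ⟨fun u h => ?_⟩
      rcases h with ⟨h1, h2⟩ | ⟨h1, h2⟩ | ⟨⟨h1, h2⟩, h3⟩ | ⟨⟨h1, h2⟩, h3⟩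
      · exact h12 (h1.symm.trans h2)
      · exact h12 (h2.symm.trans h1)
      · rcases (hf u h1 h2).1 with h | h
        · exact h1 (h3.trans h)
        · exact h2 (h3.trans h)
      · rcases (hf u h1 h2).1 with h | h
        · exact h1 (h3.trans h)
        · exact h2 (h3.trans h) } with hTdef
  have hT12 : T.Adj c1 c2 := Or.inl ⟨rfl, rfl⟩
  have hT21 : T.Adj c2 c1 := Or.inr (Or.inl ⟨rfl, rfl⟩)
  have hTleaf : ∀ v, v ≠ c1 → v ≠ c2 → T.Adj v (f v) :=
    fun v h1 h2 => Or.inr (Or.inr (Or.inl ⟨⟨h1, h2⟩, rfl⟩))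
  have hNleaf : ∀ v, v ≠ c1 → v ≠ c2 → T.neighborSet v = {f v} := by
    intro v h1 h2
    ext u
    simp only [mem_neighborSet, Set.mem_singleton_iff]
    constructor
    · intro h
      rcases h with ⟨ha, hb⟩ | ⟨ha, hb⟩ | ⟨⟨ha, hb⟩, hc⟩ | ⟨⟨ha, hb⟩, hc⟩
      · exact absurd ha h1
      · exact absurd ha h2
      · exact hc
      · rcases (hf u ha hb).1 with h | h
        · exact absurd (hc.trans h) h1
        · exact absurd (hc.trans h) h2
    · intro h
      exact Or.inr (Or.inr (Or.inl ⟨⟨h1, h2⟩, h⟩))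
  have hTle : T ≤ G := by
    intro u v h
    rcases h with ⟨ha, hb⟩ | ⟨ha, hb⟩ | ⟨⟨ha, hb⟩, hc⟩ | ⟨⟨ha, hb⟩, hc⟩
    · exact ha ▸ hb ▸ hadj
    · exact ha ▸ hb ▸ hadj.symm
    · exact hc ▸ ((hf u ha hb).2).symm
    · exact hc ▸ (hf v ha hb).2
  have hreach : ∀ v : V, T.Reachable v c1 := by
    intro v
    by_cases h1 : v = c1
    · subst h1
      exact Reachable.refl v
    by_cases h2 : v = c2
    · exact h2 ▸ hT21.reachable
    · have hA := hTleaf v h1 h2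
      rcases (hf v h1 h2).1 with h | h
      · rw [h] at hA
        exact hA.reachable
      · rw [h] at hA
        exact hA.reachable.trans hT21.reachable
  have hconnT : T.Connected := by
    rw [connected_iff]
    exact ⟨fun u v => (hreach u).trans (hreach v).symm, ⟨c1⟩⟩
  have hacyc : T.IsAcyclic := by
    intro v c hc
    by_cases hsub : ∀ z ∈ c.support, z = c1 ∨ z = c2
    · have h3 := hc.three_le_length
      have htail : c.support.tail.Nodup := ((Walk.isCycle_def c).1 hc).2.2
      have hsubset : c.support.tail.toFinset ⊆ {c1, c2} := by
        intro z hz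
        rw [List.mem_toFinset] at hz
        have := hsub z (List.mem_of_mem_tail hz)
        simpa using this
      have hcard1 : c.support.tail.toFinset.card = c.support.tail.length :=
        List.toFinset_card_of_nodup htail
      have hcard2 : c.support.tail.length = c.length := by
        have := Walk.length_support c
        have hcons : c.support.length = c.support.tail.length + 1 := by
          cases hsupp : c.support with
          | nil => exact absurd hsupp c.support_ne_nil
          | cons a l => simp
        omega
      have hle : c.support.tail.toFinset.card ≤ 2 := by
        calc c.support.tail.toFinset.card ≤ ({c1, c2} : Finset V).card :=
              Finset.card_le_card hsubset
          _ = 2 := Finset.card_pair h12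
      omega
    · push_neg at hsub
      obtain ⟨l, hl, hl1, hl2⟩ := hsub
      have hrot := hc.rotate hl
      have huniq : ∀ u w, T.Adj l u → T.Adj l w → u = w := by
        intro u w hu hw
        have hNl := hNleaf l hl1 hl2
        have hu' : u ∈ T.neighborSet l := hu
        have hw' : w ∈ T.neighborSet l := hw
        rw [hNl, Set.mem_singleton_iff] at hu' hw'
        exact hu'.trans hw'.symm
      exact no_cycle_at_leaf huniq hrot
  have hne1 : (T.neighborSet c1).ncard ≠ 1 := by
    intro h
    obtain ⟨a, ha⟩ := Set.ncard_eq_one.1 h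
    have hc2m : c2 ∈ T.neighborSet c1 := hT12
    have hv1m : v1 ∈ T.neighborSet c1 := Or.inr (Or.inr (Or.inr ⟨⟨hv1, hv1'⟩, hfv1.symm⟩))
    rw [ha, Set.mem_singleton_iff] at hc2m hv1m
    exact hv1' (hv1m.trans hc2m.symm)
  have hne2 : (T.neighborSet c2).ncard ≠ 1 := by
    intro h
    obtain ⟨a, ha⟩ := Set.ncard_eq_one.1 h
    have hc1m : c1 ∈ T.neighborSet c2 := hT21
    have hv2m : v2 ∈ T.neighborSet c2 := Or.inr (Or.inr (Or.inr ⟨⟨hv2, hv2'⟩, hfv2.symm⟩))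
    rw [ha, Set.mem_singleton_iff] at hc1m hv2m
    exact hv2 (hv2m.trans hc1m.symm)
  have hset : {v : V | (T.neighborSet v).ncard ≠ 1} = {c1, c2} := by
    ext v
    simp only [Set.mem_setOf_eq, Set.mem_insert_iff, Set.mem_singleton_iff]
    constructor
    · intro h
      by_contra hcon
      push_neg at hcon
      rw [hNleaf v hcon.1 hcon.2] at h
      simp at h
    · rintro (rfl | rfl)
      · exact hne1
      · exact hne2
  refine ⟨T, hTle, ⟨hconnT, hacyc⟩, ?_⟩
  rw [hset]
  exact Set.ncard_pair h12

end DoubleStar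

section Extract

lemma doubleStar_structure {T : SimpleGraph V} (hT : T.IsTree)
    (h2 : {v : V | (T.neighborSet v).ncard ≠ 1}.ncard = 2) :
    ∃ c1 c2 : V, c1 ≠ c2 ∧ T.Adj c1 c2 ∧
      ∀ v, v ≠ c1 → v ≠ c2 → T.Adj c1 v ∨ T.Adj c2 v := by
  obtain ⟨c1, c2, hne, hset⟩ := Set.ncard_eq_two.1 h2
  have hleaf : ∀ v, v ≠ c1 → v ≠ c2 → ∃ a, T.neighborSet v = {a} := by
    intro v hv1 hv2
    by_contra h
    have h1 : (T.neighborSet v).ncard ≠ 1 := fun hc => h (Set.ncard_eq_one.1 hc)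
    have h2' : v ∈ {v : V | (T.neighborSet v).ncard ≠ 1} := h1
    rw [hset] at h2'
    rcases h2' with h' | h'
    · exact hv1 h'
    · exact hv2 h'
  have hadj : T.Adj c1 c2 := by
    obtain ⟨p, hp⟩ := (hT.existsUnique_path c1 c2).exists
    cases p with
    | nil => exact absurd rfl hne
    | cons h q =>
      rename_i u
      by_cases hu : u = c2
      · exact hu ▸ h
      · rw [Walk.cons_isPath_iff] at hp
        have hu1 : u ≠ c1 := fun h' => hp.2 (h' ▸ q.start_mem_support)
        obtain ⟨a, ha⟩ := hleaf u hu1 hu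
        have hac1 : a = c1 := by
          have hm : c1 ∈ T.neighborSet u := h.symm
          rw [ha, Set.mem_singleton_iff] at hm
          exact hm.symm
        cases q with
        | nil => exact absurd rfl hu
        | cons h' r =>
          rename_i u'
          have hm : u' ∈ T.neighborSet u := h'
          rw [ha, Set.mem_singleton_iff, hac1] at hm
          exact absurd (by rw [← hm] at hp; exact hp.2 (by simp [r.start_mem_support]))
            not_false
  refine ⟨c1, c2, hne, hadj, ?_⟩
  intro v hv1 hv2
  obtain ⟨a, ha⟩ := hleaf v hv1 hv2
  have hav : T.Adj v a := by
    have hm : a ∈ T.neighborSet v := by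
      rw [ha]
      exact Set.mem_singleton a
    exact hm
  by_cases ha1 : a = c1
  · exact Or.inl (ha1 ▸ hav.symm)
  by_cases ha2 : a = c2
  · exact Or.inr (ha2 ▸ hav.symm)
  · exfalso
    obtain ⟨b, hb⟩ := hleaf a ha1 ha2
    have hbv : b = v := by
      have hm : v ∈ T.neighborSet a := hav.symm
      rw [hb, Set.mem_singleton_iff] at hm
      exact hm.symm
    obtain ⟨p, hp⟩ := (hT.existsUnique_path v c1).exists
    cases p with
    | nil => exact hv1 rfl
    | cons h q =>
      rename_i z
      have hz : z = a := by
        have hm : z ∈ T.neighborSet v := h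
        rw [ha, Set.mem_singleton_iff] at hm
        exact hm
      subst hz
      cases q with
      | nil => exact ha1 rfl
      | cons h' r =>
        rename_i z'
        have hz' : z' = v := by
          have hm : z' ∈ T.neighborSet z := h'
          rw [hb, Set.mem_singleton_iff] at hm
          exact hm.trans hbv
        rw [Walk.cons_isPath_iff] at hp
        exact hp.2 (by rw [← hz']; simp [r.start_mem_support])

end Extract


/-- vv(G) = n(G) − 2 iff G has no universal vertex and G contains a spanning
double star (a spanning tree with exactly two non-leaf vertices). -/
theorem stmt_6 [Fintype V] (G : SimpleGraph V)
    (hconn : G.Connected) (hn : 2 ≤ Fintype.card V) :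
    G.vv = Fintype.card V - 2 ↔
      (¬ ∃ x : V, ∀ y : V, y ≠ x → G.Adj x y) ∧
      (∃ T : SimpleGraph V, T ≤ G ∧ T.IsTree ∧
        {v : V | (T.neighborSet v).ncard ≠ 1}.ncard = 2) := by
  classical
  have hnonempty : Nonempty V := Fintype.card_pos_iff.1 (by omega)
  constructor
  · intro hvv
    have hnu : ¬ ∃ x : V, ∀ y : V, y ≠ x → G.Adj x y := by
      rintro ⟨x, hx⟩
      have := universal_vv hn hx
      omega
    refine ⟨hnu, ?_⟩
    obtain ⟨x, hx⟩ := vv_spec G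
    obtain ⟨S, hS, hc⟩ := vx_spec G x
    have hcS : S.card = Fintype.card V - 2 := by rw [hc, ← hx, hvv]
    obtain ⟨w, hwx, hwS, htri, hcov⟩ := cover_of_visSet_card hS hcS hn
    have hySmem : ∀ y : V, y ≠ x → y ≠ w → y ∈ S := by
      intro y h1 h2
      rcases htri y with h | h | h
      · exact absurd h h1
      · exact absurd h h2
      · exact h
    by_cases hA : ∃ y ∈ S, ¬ G.Adj x y
    · obtain ⟨y0, hy0S, hy0⟩ := hA
      obtain ⟨hxw, hwy0, -⟩ := (hcov y0 hy0S).resolve_left hy0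
      have hy0x : y0 ≠ x := fun h => hS.1 (h ▸ hy0S)
      have hy0w : y0 ≠ w := fun h => hwS (h ▸ hy0S)
      have hEa : ∃ a, a ≠ x ∧ a ≠ w ∧ G.Adj x a := by
        by_contra hcon
        push_neg at hcon
        refine hnu ⟨w, ?_⟩
        intro y hy
        by_cases hyx : y = x
        · exact hyx ▸ hxw.symm
        · have hyS : y ∈ S := hySmem y hyx hy
          rcases hcov y hyS with h | h
          · exact absurd h (hcon y hyx hy)
          · exact h.2.1
      obtain ⟨a, hax, haw, hxa⟩ := hEa
      set f : V → V := fun v => if G.Adj x v then x else w with hfdef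
      have hf : ∀ v, v ≠ x → v ≠ w → (f v = x ∨ f v = w) ∧ G.Adj (f v) v := by
        intro v h1 h2
        by_cases hadj : G.Adj x v
        · have hfv : f v = x := by simp [hfdef, hadj]
          rw [hfv]
          exact ⟨Or.inl rfl, hadj⟩
        · have hfv : f v = w := by simp [hfdef, hadj]
          rw [hfv]
          exact ⟨Or.inr rfl, ((hcov v (hySmem v h1 h2)).resolve_left hadj).2.1⟩
      have hfa : f a = x := by simp [hfdef, hxa]
      have hfy0 : f y0 = w := by simp [hfdef, hy0]
      exact exists_doubleStar G (Ne.symm hwx) hxw f hf hax haw hfa hy0x hy0w hfy0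
    · push_neg at hA
      have hnxw : ¬ G.Adj x w := by
        intro h
        refine hnu ⟨x, fun y hy => ?_⟩
        by_cases hyw : y = w
        · exact hyw ▸ h
        · exact hA y (hySmem y hy hyw)
      obtain ⟨z, hz⟩ := exists_adj hconn hn w
      have hzx : z ≠ x := fun h => hnxw ((h ▸ hz).symm)
      have hzw : z ≠ w := hz.ne'
      have hzS : z ∈ S := hySmem z hzx hzw
      have hxz : G.Adj x z := hA z hzS
      have hEa : ∃ a, a ≠ x ∧ a ≠ z ∧ a ≠ w := by
        by_contra hcon
        push_neg at hcon
        refine hnu ⟨z, fun y hy => ?_⟩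
        by_cases hyx : y = x
        · exact hyx ▸ hxz.symm
        by_cases hyw : y = w
        · exact hyw ▸ hz.symm
        · exact absurd (hcon y hyx hy) hyw
      obtain ⟨a, hax, haz, haw⟩ := hEa
      have hxa : G.Adj x a := hA a (hySmem a hax haw)
      set f : V → V := fun v => if v = w then z else x with hfdef
      have hf : ∀ v, v ≠ x → v ≠ z → (f v = x ∨ f v = z) ∧ G.Adj (f v) v := by
        intro v h1 h2
        by_cases hvw : v = w
        · have hfv : f v = z := by simp [hfdef, hvw]
          rw [hfv, hvw]
          exact ⟨Or.inr rfl, hz.symm⟩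
        · have hfv : f v = x := by simp [hfdef, hvw]
          rw [hfv]
          exact ⟨Or.inl rfl, hA v (hySmem v h1 hvw)⟩
      have hfa : f a = x := by simp [hfdef, haw]
      have hfw : f w = z := by simp [hfdef]
      exact exists_doubleStar G (Ne.symm hzx) hxz f hf hax haz hfa hwx (Ne.symm hzw) hfw
  · rintro ⟨hnu, T, hTle, hTtree, hT2⟩
    obtain ⟨c1, c2, hne, hadj, hcov⟩ := doubleStar_structure hTtree hT2
    have hub := vv_le_of_no_universal (G := G) hnu
    have hcovG : ∀ y : V, y ≠ c1 → y ≠ c2 → G.Adj c1 y ∨ (G.Adj c1 c2 ∧ G.Adj c2 y) := by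
      intro y h1 h2
      rcases hcov y h1 h2 with h | h
      · exact Or.inl (hTle h)
      · exact Or.inr ⟨hTle hadj, hTle h⟩
    have hvis := isXVisSet_of_cover (G := G) hconn hne hcovG
    have hlb := card_le_vx hvis
    rw [card_univ_sdiff_pair hne] at hlb
    have hvx := vx_le_vv G c1
    omega
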